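/- Let M be a connected topological space, let A be a von Neumann algebra acting on a complex Hilbert space H, and let q : M → A be continuous into B(H) with the weak operator topology, with each q(x) a minimal projection of A. Then for every pair of points x, y ∈ M there exists B ∈ A with q(x)·B·q(y) ≠ 0. -/
import Mathlib

open MeasureTheory
open scoped InnerProductSpace

private lemma exists_vec_ne {H : Type*} [NormedAddCommGroup H] [InnerProductSpace ℂ H]
    (T : H →L[ℂ] H) (hT : T ≠ 0) : ∃ w, T w ≠ 0 := by
  by_contra h
  push_neg at h
  exact hT (by ext w; simpa using h w)

private lemma adj_mul_self_ne_zero {H : Type*} [NormedAddCommGroup H] [InnerProductSpace ℂ H]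
    [CompleteSpace H] (T : H →L[ℂ] H) (hT : T ≠ 0) :
    ContinuousLinearMap.adjoint T * T ≠ 0 := by
  intro h
  apply hT
  ext w
  have h1 : ⟪T w, T w⟫_ℂ = 0 := by
    have h2 := congrArg (fun S : H →L[ℂ] H => S w) h
    simp only [ContinuousLinearMap.mul_apply, ContinuousLinearMap.zero_apply] at h2
    rw [← ContinuousLinearMap.adjoint_inner_right, h2, inner_zero_right]
  simpa using inner_self_eq_zero.mp h1

theorem exists_nonvanishing_transition
    {M : Type*} [TopologicalSpace M] [ConnectedSpace M]
    {H : Type*} [NormedAddCommGroup H] [InnerProductSpace ℂ H] [CompleteSpace H]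
    (A : VonNeumannAlgebra H) (q : M → (H →L[ℂ] H))
    (hq_mem : ∀ x, q x ∈ A)
    (hq_cont : ∀ v w : H, Continuous fun x => ⟪v, q x w⟫_ℂ)
    (hq_ne : ∀ x, q x ≠ 0)
    (hq_idem : ∀ x, q x * q x = q x)
    (hq_sa : ∀ x, ContinuousLinearMap.adjoint (q x) = q x)
    (hq_min : ∀ x, ∀ a ∈ A, ∃ c : ℂ, q x * a * q x = c • q x) :
    ∀ x y : M, ∃ B ∈ A, q x * B * q y ≠ 0 := by
  intro x y
  set S : Set M := {z | ∃ B ∈ (A : Set (H →L[ℂ] H)), q x * B * q z ≠ 0} with hS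
  have hxS : x ∈ S := by
    refine ⟨q x, hq_mem x, ?_⟩
    rw [hq_idem x, hq_idem x]
    exact hq_ne x
  -- S is open
  have hopen : IsOpen S := by
    rw [isOpen_iff_mem_nhds]
    rintro z ⟨B, hB, hne⟩
    obtain ⟨w, hw⟩ := exists_vec_ne _ hne
    have hvw : ⟪(q x * B * q z) w, (q x * B * q z) w⟫_ℂ ≠ 0 := by simpa using hw
    set v := (q x * B * q z) w with hv
    have hcont : Continuous fun z' =>
        ⟪ContinuousLinearMap.adjoint (q x * B) v, q z' w⟫_ℂ :=
      hq_cont _ _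
    have hkey : ∀ z', ⟪ContinuousLinearMap.adjoint (q x * B) v, q z' w⟫_ℂ
        = ⟪v, (q x * B * q z') w⟫_ℂ := by
      intro z'
      rw [ContinuousLinearMap.adjoint_inner_left]
      simp [ContinuousLinearMap.mul_apply]
    have hU : IsOpen {z' | ⟪ContinuousLinearMap.adjoint (q x * B) v, q z' w⟫_ℂ ≠ 0} :=
      isOpen_compl_singleton.preimage hcont
    refine Filter.mem_of_superset (hU.mem_nhds ?_) ?_
    · show _ ≠ 0; rw [hkey]; exact hvw
    · intro z' hz'
      simp only [Set.mem_setOf_eq] at hz'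
      refine ⟨B, hB, fun h0 => ?_⟩
      rw [hkey, h0] at hz'
      simp at hz'
  -- S is closed
  have hclosed : IsClosed S := by
    rw [← isOpen_compl_iff, isOpen_iff_mem_nhds]
    intro z hz
    simp only [Set.mem_compl_iff, hS, Set.mem_setOf_eq, not_exists] at hz
    push_neg at hz
    obtain ⟨v, hv⟩ := exists_vec_ne _ (hq_ne z)
    have hcont : Continuous fun z' => ⟪q z v, q z' (q z v)⟫_ℂ := hq_cont _ _
    have hU : IsOpen {z' | ⟪q z v, q z' (q z v)⟫_ℂ ≠ 0} :=
      isOpen_compl_singleton.preimage hcont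
    refine Filter.mem_of_superset (hU.mem_nhds ?_) ?_
    · show ⟪q z v, q z (q z v)⟫_ℂ ≠ 0
      have hq : q z (q z v) = q z v := by
        have := congrArg (fun T : H →L[ℂ] H => T v) (hq_idem z)
        simpa [ContinuousLinearMap.mul_apply] using this
      rw [hq]
      simpa using hv
    · intro z' hz'
      simp only [Set.mem_setOf_eq] at hz'
      rintro ⟨B, hB, hBne⟩
      -- ⟪q z v, q z' (q z v)⟫ = ‖q z' (q z v)‖²
      have hP : ⟪q z v, q z' (q z v)⟫_ℂ = ⟪q z' (q z v), q z' (q z v)⟫_ℂ := by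
        have h1 : q z' (q z v) = q z' (q z' (q z v)) := by
          have := congrArg (fun T : H →L[ℂ] H => T (q z v)) (hq_idem z')
          simpa [ContinuousLinearMap.mul_apply] using this.symm
        calc ⟪q z v, q z' (q z v)⟫_ℂ
            = ⟪q z v, q z' (q z' (q z v))⟫_ℂ := congrArg (fun u => ⟪q z v, u⟫_ℂ) h1
          _ = ⟪ContinuousLinearMap.adjoint (q z') (q z v), q z' (q z v)⟫_ℂ :=
              (ContinuousLinearMap.adjoint_inner_left _ _ _).symm
          _ = ⟪q z' (q z v), q z' (q z v)⟫_ℂ := by rw [hq_sa]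
      have hqz'qz : q z' * q z ≠ 0 := by
        intro h
        have := congrArg (fun T : H →L[ℂ] H => T v) h
        simp only [ContinuousLinearMap.mul_apply, ContinuousLinearMap.zero_apply] at this
        rw [hP, this] at hz'
        simp at hz'
      have hqzqz' : q z * q z' ≠ 0 := by
        intro h
        apply hqz'qz
        have := congrArg star h
        simpa [star_mul, ContinuousLinearMap.star_eq_adjoint, hq_sa] using this
      have hadj : ContinuousLinearMap.adjoint (q z * q z') = q z' * q z := by
        rw [← ContinuousLinearMap.star_eq_adjoint, star_mul,
          ContinuousLinearMap.star_eq_adjoint, ContinuousLinearMap.star_eq_adjoint,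
          hq_sa, hq_sa]
      have h3 : q z' * q z * q z' ≠ 0 := by
        have h4 := adj_mul_self_ne_zero (q z * q z') hqzqz'
        rw [hadj] at h4
        intro h5
        apply h4
        calc q z' * q z * (q z * q z') = q z' * (q z * q z) * q z' := by
              simp only [mul_assoc]
          _ = q z' * q z * q z' := by rw [hq_idem z]
          _ = 0 := h5
      obtain ⟨c, hc⟩ := hq_min z' (q z) (hq_mem z)
      have hcne : c ≠ 0 := by
        intro h
        rw [h, zero_smul] at hc
        exact h3 hc
      -- key computation
      have e1 : q z * (q z * q z') = q z * q z' := by rw [← mul_assoc, hq_idem]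
      have hc' : q z' * (q z * q z') = c • q z' := by rw [← mul_assoc]; exact hc
      have key : q x * (B * (q z' * q z)) * q z * q z' = c • (q x * B * q z') := by
        simp only [mul_assoc]
        rw [e1, hc']
        simp [mul_smul_comm]
      have hmem : B * (q z' * q z) ∈ A :=
        mul_mem (SetLike.mem_coe.mp hB) (mul_mem (hq_mem z') (hq_mem z))
      have h0 : q x * (B * (q z' * q z)) * q z = 0 := hz _ hmem
      rw [h0, zero_mul] at key
      rcases smul_eq_zero.mp key.symm with h | h
      · exact hcne h
      · exact hBne h
  have hSuniv : S = Set.univ := IsClopen.eq_univ ⟨hclosed, hopen⟩ ⟨x, hxS⟩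
  have hy : y ∈ S := hSuniv ▸ Set.mem_univ y
  exact hy
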